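/- Let X be a real Banach space, x₀ ∈ X, and let Ω ⊊ X be a domain that is starlike with respect to x₀. Then for every r > 0 the closed quasihyperbolic ball B_k(x₀, r) = {y ∈ Ω : k_Ω(x₀, y) ≤ r} is starlike with respect to x₀. -/

import Mathlib

/-- The quasihyperbolic length of a path `γ` on `[a,b]` in a domain `Ω`:
`ℓ_k(γ) = ∫ₐᵇ ‖γ′(t)‖ / d(γ(t)) dt`, where `d(x) = dist(x, X ∖ Ω)`. -/
noncomputable def qhLength {X : Type*} [NormedAddCommGroup X] [NormedSpace ℝ X]
    (Ω : Set X) (γ : ℝ → X) (a b : ℝ) : ℝ :=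
  ∫ t in a..b, ‖deriv γ t‖ / Metric.infDist (γ t) Ωᶜ

/-- The quasihyperbolic distance on a domain `Ω`: the infimum of quasihyperbolic lengths
over continuously differentiable paths in `Ω` joining the two points. -/
noncomputable def qhDist {X : Type*} [NormedAddCommGroup X] [NormedSpace ℝ X]
    (Ω : Set X) (x y : X) : ℝ :=
  sInf ((fun γ : ℝ → X => qhLength Ω γ 0 1) ''
    {γ | ContDiff ℝ 1 γ ∧ Set.MapsTo γ (Set.Icc 0 1) Ω ∧ γ 0 = x ∧ γ 1 = y})

/-- In a starlike domain, the distance to the complement grows at least linearly along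
rays towards the star center. -/
lemma infDist_smul_comb_ge {X : Type*} [NormedAddCommGroup X] [NormedSpace ℝ X]
    (Ω : Set X) (hΩproper : Ω ≠ Set.univ) (x₀ : X)
    (hstar : ∀ y ∈ Ω, ∀ t ∈ Set.Icc (0 : ℝ) 1, t • x₀ + (1 - t) • y ∈ Ω)
    (x : X) (hx : x ∈ Ω) (t : ℝ) (ht : t ∈ Set.Icc (0 : ℝ) 1) :
    (1 - t) * Metric.infDist x Ωᶜ ≤ Metric.infDist (t • x₀ + (1 - t) • x) Ωᶜ := by
  have hne : (Ωᶜ).Nonempty := by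
    rw [Set.nonempty_compl]; exact hΩproper
  by_contra h
  push_neg at h
  obtain ⟨w, hw, hwd⟩ := (Metric.infDist_lt_iff hne).mp h
  rcases eq_or_lt_of_le ht.2 with h1 | h1
  · have : (1 : ℝ) - t = 0 := by rw [← h1]; ring
    rw [this, zero_mul] at hwd
    exact absurd hwd (not_lt.mpr dist_nonneg)
  · have h1t : (0 : ℝ) < 1 - t := by linarith
    set p : X := (1 - t)⁻¹ • (w - t • x₀) with hp
    have hwp : w = t • x₀ + (1 - t) • p := by
      rw [hp, smul_inv_smul₀ (ne_of_gt h1t)]; abel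
    have hdist : dist (t • x₀ + (1 - t) • x) w = (1 - t) * dist x p := by
      rw [hwp, dist_eq_norm]
      have : t • x₀ + (1 - t) • x - (t • x₀ + (1 - t) • p) = (1 - t) • (x - p) := by
        rw [smul_sub]; abel
      rw [this, norm_smul, Real.norm_eq_abs, abs_of_pos h1t, dist_eq_norm]
    rw [hdist] at hwd
    have hxp : dist x p < Metric.infDist x Ωᶜ :=
      lt_of_mul_lt_mul_left hwd (le_of_lt h1t)
    have hpΩ : p ∈ Ω := by
      by_contra hpc
      exact absurd (Metric.infDist_le_dist_of_mem (Set.mem_compl hpc)) (not_le.mpr hxp)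
    exact hw (hwp ▸ hstar p hpΩ t ⟨ht.1, ht.2⟩)

/-- If a domain `Ω` of a Banach space is starlike with respect to `x₀`, then every closed
quasihyperbolic ball centered at `x₀` is starlike with respect to `x₀`. -/
theorem qhBall_starlike_of_starlike_domain
    {X : Type*} [NormedAddCommGroup X] [NormedSpace ℝ X] [CompleteSpace X]
    (Ω : Set X) (hΩopen : IsOpen Ω) (hΩconn : IsConnected Ω) (hΩproper : Ω ≠ Set.univ)
    (x₀ : X) (hx₀ : x₀ ∈ Ω)
    (hstar : ∀ y ∈ Ω, ∀ t ∈ Set.Icc (0 : ℝ) 1, t • x₀ + (1 - t) • y ∈ Ω)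
    (r : ℝ) (hr : 0 < r) :
    ∀ y ∈ {y ∈ Ω | qhDist Ω x₀ y ≤ r}, ∀ t ∈ Set.Icc (0 : ℝ) 1,
      t • x₀ + (1 - t) • y ∈ {y ∈ Ω | qhDist Ω x₀ y ≤ r} := by
  have hne : (Ωᶜ).Nonempty := by rw [Set.nonempty_compl]; exact hΩproper
  have hdpos : ∀ x ∈ Ω, 0 < Metric.infDist x Ωᶜ := fun x hx =>
    (IsClosed.notMem_iff_infDist_pos hΩopen.isClosed_compl hne).mp (by simpa using hx)
  rintro y ⟨hyΩ, hyd⟩ t ht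
  set z := t • x₀ + (1 - t) • y with hz
  have hzΩ : z ∈ Ω := hstar y hyΩ t ht
  refine ⟨hzΩ, ?_⟩
  -- sets of admissible paths
  set Sy := ((fun γ : ℝ → X => qhLength Ω γ 0 1) ''
    {γ | ContDiff ℝ 1 γ ∧ Set.MapsTo γ (Set.Icc 0 1) Ω ∧ γ 0 = x₀ ∧ γ 1 = y}) with hSy
  set Sz := ((fun γ : ℝ → X => qhLength Ω γ 0 1) ''
    {γ | ContDiff ℝ 1 γ ∧ Set.MapsTo γ (Set.Icc 0 1) Ω ∧ γ 0 = x₀ ∧ γ 1 = z}) with hSz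
  have hbddz : BddBelow Sz := by
    refine ⟨0, ?_⟩
    rintro v ⟨γ, _, rfl⟩
    exact intervalIntegral.integral_nonneg zero_le_one fun u _ =>
      div_nonneg (norm_nonneg _) Metric.infDist_nonneg
  -- Sy is nonempty: the straight segment works
  have hSyne : Sy.Nonempty := by
    refine ⟨_, ⟨fun u : ℝ => (1 - u) • x₀ + (1 - (1 - u)) • y, ⟨?_, ?_, ?_, ?_⟩, rfl⟩⟩
    · exact ((contDiff_const.sub contDiff_id).smul contDiff_const).add
        ((contDiff_const.sub (contDiff_const.sub contDiff_id)).smul contDiff_const)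
    · intro u hu
      exact hstar y hyΩ (1 - u) ⟨by linarith [hu.2], by linarith [hu.1]⟩
    · simp
    · simp
  -- main estimate: contracting a path does not increase its qh length
  have key : ∀ v ∈ Sy, qhDist Ω x₀ z ≤ v := by
    rintro v ⟨γ, ⟨hγ, hγmap, hγ0, hγ1⟩, rfl⟩
    set η : ℝ → X := fun u => t • x₀ + (1 - t) • γ u with hη
    have hγdiff : Differentiable ℝ γ := hγ.differentiable one_ne_zero
    have hηderiv : ∀ u, deriv η u = (1 - t) • deriv γ u := by
      intro u
      exact ((((hγdiff u).hasDerivAt).const_smul (1 - t)).const_add (t • x₀)).deriv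
    have hηmem : ∀ u ∈ Set.Icc (0 : ℝ) 1, η u ∈ Ω := fun u hu =>
      hstar (γ u) (hγmap hu) t ht
    have hηS : qhLength Ω η 0 1 ∈ Sz := by
      refine ⟨η, ⟨contDiff_const.add (hγ.const_smul _), hηmem, ?_, ?_⟩, rfl⟩
      · simp [hη, hγ0]
      · simp [hη, hγ1, hz]
    have h1 : qhDist Ω x₀ z ≤ qhLength Ω η 0 1 := csInf_le hbddz hηS
    refine h1.trans ?_
    -- pointwise comparison of integrands
    have hpt : ∀ u ∈ Set.Icc (0 : ℝ) 1,
        ‖deriv η u‖ / Metric.infDist (η u) Ωᶜ ≤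
        ‖deriv γ u‖ / Metric.infDist (γ u) Ωᶜ := by
      intro u hu
      have hd : 0 < Metric.infDist (γ u) Ωᶜ := hdpos _ (hγmap hu)
      have hD : (1 - t) * Metric.infDist (γ u) Ωᶜ ≤ Metric.infDist (η u) Ωᶜ :=
        infDist_smul_comb_ge Ω hΩproper x₀ hstar (γ u) (hγmap hu) t ht
      rw [hηderiv u, norm_smul, Real.norm_eq_abs, abs_of_nonneg (by linarith [ht.2])]
      rcases eq_or_lt_of_le ht.2 with h1t | h1t
      · have : (1 : ℝ) - t = 0 := by rw [← h1t]; ring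
        rw [this, zero_mul, zero_div]
        exact div_nonneg (norm_nonneg _) (le_of_lt hd)
      · have h1t' : (0 : ℝ) < 1 - t := by linarith
        calc (1 - t) * ‖deriv γ u‖ / Metric.infDist (η u) Ωᶜ
            ≤ (1 - t) * ‖deriv γ u‖ / ((1 - t) * Metric.infDist (γ u) Ωᶜ) := by
              apply div_le_div_of_nonneg_left (by positivity) (by positivity) hD
          _ = ‖deriv γ u‖ / Metric.infDist (γ u) Ωᶜ :=
              mul_div_mul_left _ _ (ne_of_gt h1t')
    -- integrability of both integrands
    have hcont : ∀ (σ : ℝ → X), ContDiff ℝ 1 σ → (∀ u ∈ Set.Icc (0:ℝ) 1, σ u ∈ Ω) →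
        IntervalIntegrable (fun u => ‖deriv σ u‖ / Metric.infDist (σ u) Ωᶜ)
          MeasureTheory.volume 0 1 := by
      intro σ hσ hσmem
      apply ContinuousOn.intervalIntegrable
      rw [Set.uIcc_of_le zero_le_one]
      apply ContinuousOn.div
      · exact ((hσ.continuous_deriv le_rfl).norm).continuousOn
      · exact ((Metric.continuous_infDist_pt Ωᶜ).comp hσ.continuous).continuousOn
      · intro u hu
        exact ne_of_gt (hdpos _ (hσmem u hu))
    exact intervalIntegral.integral_mono_on zero_le_one
      (hcont η (contDiff_const.add (hγ.const_smul _)) hηmem)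
      (hcont γ hγ (fun u hu => hγmap hu)) hpt
  have : qhDist Ω x₀ z ≤ qhDist Ω x₀ y := le_csInf hSyne key
  exact this.trans hyd
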